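/- Let A ∈ ℤ^{d×n}. The Graver basis of the Lawrence lifting L(A) = [[A, 0],[Iₙ, Iₙ]] equals {(u, −u) : u ∈ G(A)}, where G(A) is the Graver basis of A. -/

import Mathlib

open Matrix

/-- The partial order `⊑`: `u ⊑ v` iff componentwise `u j * v j ≥ 0` and `|u j| ≤ |v j|`. -/
def sqle {m : Type*} (u v : m → ℤ) : Prop :=
  ∀ j, 0 ≤ u j * v j ∧ |u j| ≤ |v j|

/-- The Graver basis of an integer matrix: the set of `⊑`-minimal nonzero integer
vectors in its kernel. -/
def graverBasis {d m : Type*} [Fintype m] (M : Matrix d m ℤ) : Set (m → ℤ) :=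
  {v | v ≠ 0 ∧ M.mulVec v = 0 ∧
    ∀ w : m → ℤ, w ≠ 0 → M.mulVec w = 0 → sqle w v → w = v}

lemma lawrence_ker_iff {d n : ℕ} (A : Matrix (Fin d) (Fin n) ℤ)
    (w : Fin n ⊕ Fin n → ℤ) :
    (Matrix.fromBlocks A 0 (1 : Matrix (Fin n) (Fin n) ℤ) 1).mulVec w = 0 ↔
      A.mulVec (w ∘ Sum.inl) = 0 ∧ (w ∘ Sum.inr) = -(w ∘ Sum.inl) := by
  have hw : w = Sum.elim (w ∘ Sum.inl) (w ∘ Sum.inr) := by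
    funext j; cases j <;> rfl
  constructor
  · intro h
    rw [hw, Matrix.fromBlocks_mulVec] at h
    simp only [Matrix.zero_mulVec, Matrix.one_mulVec, add_zero] at h
    have h1 : ∀ i, (A.mulVec (w ∘ Sum.inl)) i = 0 := fun i => congrFun h (Sum.inl i)
    have h2 : ∀ i, (w ∘ Sum.inl) i + (w ∘ Sum.inr) i = 0 := fun i => congrFun h (Sum.inr i)
    constructor
    · funext i; exact h1 i
    · funext i; have := h2 i; simp only [Pi.neg_apply]; linarith
  · rintro ⟨h1, h2⟩
    rw [hw, Matrix.fromBlocks_mulVec]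
    simp only [Matrix.zero_mulVec, Matrix.one_mulVec, add_zero, h1, h2]
    funext j; cases j with
    | inl i => exact congrFun h1 i
    | inr i => simp

theorem graver_lawrence_lifting (d n : ℕ) (A : Matrix (Fin d) (Fin n) ℤ) :
    graverBasis (Matrix.fromBlocks A 0 (1 : Matrix (Fin n) (Fin n) ℤ) 1) =
      {w | ∃ u ∈ graverBasis A, w = Sum.elim u (-u)} := by
  ext w
  constructor
  · rintro ⟨hne, hker, hmin⟩
    obtain ⟨h1, h2⟩ := (lawrence_ker_iff A w).mp hker
    set u : Fin n → ℤ := w ∘ Sum.inl with hu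
    have hwe : w = Sum.elim u (-u) := by
      funext j; cases j with
      | inl i => rfl
      | inr i => exact congrFun h2 i
    refine ⟨u, ⟨?_, h1, ?_⟩, hwe⟩
    · intro h0
      apply hne
      rw [hwe, h0]
      funext j; cases j <;> simp
    · intro v hv0 hvker hvle
      have hz : Sum.elim v (-v) = w := by
        apply hmin
        · intro h0
          apply hv0
          funext i
          exact congrFun h0 (Sum.inl i)
        · rw [lawrence_ker_iff]
          constructor
          · exact hvker
          · funext i; simp
        · intro j
          rw [hwe]
          cases j with
          | inl i => exact hvle i
          | inr i =>
            obtain ⟨ha, hb⟩ := hvle i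
            constructor
            · simpa using ha
            · simpa using hb
      funext i
      exact congrFun hz (Sum.inl i)
  · rintro ⟨u, ⟨hu0, huker, humin⟩, hwe⟩
    subst hwe
    refine ⟨?_, ?_, ?_⟩
    · intro h0
      apply hu0
      funext i
      exact congrFun h0 (Sum.inl i)
    · rw [lawrence_ker_iff]
      constructor
      · convert huker using 2
        rfl
      · funext i; simp
    · intro z hz0 hzker hzle
      obtain ⟨h1, h2⟩ := (lawrence_ker_iff A z).mp hzker
      set v : Fin n → ℤ := z ∘ Sum.inl with hv
      have hze : z = Sum.elim v (-v) := by
        funext j; cases j with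
        | inl i => rfl
        | inr i => exact congrFun h2 i
      have hvu : v = u := by
        apply humin v _ h1
        · intro i; exact hzle (Sum.inl i)
        · intro h0
          apply hz0
          rw [hze, h0]
          funext j; cases j <;> simp
      rw [hze, hvu]
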